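/- arXiv:2010.09860 — 6 statements merged into one kernel-verified Lean document; each statement's English description precedes it below -/
import Mathlib

section
/- (Integral representation.) For every complex s with Re(s) > 0 and every complex z with |z| < 1, the function t ↦ t^{s−1} · z e^{−t} / (1 − z e^{−t}) is integrable on (0, ∞) and ∫₀^∞ t^{s−1} · z e^{−t} / (1 − z e^{−t}) dt = Γ(s) · ∑_{k=1}^∞ z^k / k^s, where t^{s−1} = exp((s−1)·ln t) for t > 0 and Γ is the complex Gamma function. -/
open MeasureTheory Set Complex Filter
open scoped Real

/-- Bose–Einstein integral representation: for `Re(s) > 0` and `|z| < 1`,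
`∫₀^∞ t^(s-1) · z e^(-t) / (1 - z e^(-t)) dt = Γ(s) · Li_s(z)`. -/
theorem polylog_integral_repr (s z : ℂ) (hs : 0 < s.re) (hz : ‖z‖ < 1) :
    IntegrableOn
      (fun t : ℝ => (t : ℂ) ^ (s - 1) * (z * Real.exp (-t)) / (1 - z * Real.exp (-t)))
      (Set.Ioi 0) ∧
    (∫ t in Set.Ioi (0 : ℝ),
        (t : ℂ) ^ (s - 1) * (z * Real.exp (-t)) / (1 - z * Real.exp (-t)))
      = Complex.Gamma s * ∑' k : ℕ+, z ^ (k : ℕ) / (k : ℂ) ^ s := by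
  have hz1 : (0:ℝ) < 1 - ‖z‖ := by linarith
  have hnorm : ∀ t : ℝ, 0 < t → ‖z * (Real.exp (-t) : ℂ)‖ ≤ ‖z‖ := by
    intro t ht
    rw [norm_mul, Complex.norm_real, Real.norm_eq_abs, abs_of_pos (Real.exp_pos _)]
    nlinarith [Real.exp_pos (-t), Real.exp_lt_one_iff.mpr (neg_lt_zero.mpr ht),
      norm_nonneg z]
  have hlt : ∀ t : ℝ, 0 < t → ‖z * (Real.exp (-t) : ℂ)‖ < 1 :=
    fun t ht => lt_of_le_of_lt (hnorm t ht) hz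
  have hne : ∀ t : ℝ, 0 < t → (1 : ℂ) - z * Real.exp (-t) ≠ 0 := by
    intro t ht h
    have h1 : z * (Real.exp (-t) : ℂ) = 1 := by linear_combination -h
    have h2 := hlt t ht
    rw [h1] at h2
    simp at h2
  have hden : ∀ t : ℝ, 0 < t → 1 - ‖z‖ ≤ ‖(1 : ℂ) - z * Real.exp (-t)‖ := by
    intro t ht
    calc 1 - ‖z‖ ≤ 1 - ‖z * (Real.exp (-t) : ℂ)‖ := by linarith [hnorm t ht]
      _ ≤ ‖(1:ℂ)‖ - ‖z * (Real.exp (-t) : ℂ)‖ := by simp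
      _ ≤ ‖(1:ℂ) - z * Real.exp (-t)‖ := norm_sub_norm_le _ _
  -- integrability
  have hint : IntegrableOn
      (fun t : ℝ => (t : ℂ) ^ (s - 1) * (z * Real.exp (-t)) / (1 - z * Real.exp (-t)))
      (Set.Ioi 0) := by
    have hmeas : AEStronglyMeasurable
        (fun t : ℝ => (t : ℂ) ^ (s - 1) * (z * Real.exp (-t)) / (1 - z * Real.exp (-t)))
        (volume.restrict (Ioi 0)) := by
      apply ContinuousOn.aestronglyMeasurable _ measurableSet_Ioi
      apply ContinuousOn.div
      · apply ContinuousOn.mul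
        · exact fun t ht => (continuousAt_ofReal_cpow_const _ _
            (Or.inr (ne_of_gt ht))).continuousWithinAt
        · exact (continuous_const.mul (Complex.continuous_ofReal.comp
            (Real.continuous_exp.comp continuous_neg))).continuousOn
      · exact (continuous_const.sub (continuous_const.mul (Complex.continuous_ofReal.comp
          (Real.continuous_exp.comp continuous_neg)))).continuousOn
      · exact fun t ht => hne t ht
    have hbd : IntegrableOn
        (fun t : ℝ => (‖z‖ / (1 - ‖z‖)) * (Real.exp (-t) * t ^ (s.re - 1))) (Ioi 0) :=
      (Real.GammaIntegral_convergent hs).const_mul _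
    refine Integrable.mono hbd hmeas ?_
    refine (ae_restrict_iff' measurableSet_Ioi).mpr (Filter.Eventually.of_forall fun t ht => ?_)
    have ht : 0 < t := ht
    rw [norm_div, norm_mul]
    have h1 : ‖(t : ℂ) ^ (s - 1)‖ = t ^ (s.re - 1) := by
      rw [Complex.norm_cpow_eq_rpow_re_of_pos ht, Complex.sub_re,
        Complex.one_re]
    have h2 : ‖z * (Real.exp (-t) : ℂ)‖ ≤ ‖z‖ * Real.exp (-t) := by
      rw [norm_mul, Complex.norm_real, Real.norm_eq_abs, abs_of_pos (Real.exp_pos _)]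
    have h3 := hden t ht
    rw [h1, Real.norm_of_nonneg (by positivity), div_le_iff₀ (lt_of_lt_of_le hz1 h3)]
    have hEq : (‖z‖ / (1 - ‖z‖)) * (Real.exp (-t) * t ^ (s.re - 1)) * (1 - ‖z‖)
        = t ^ (s.re - 1) * (‖z‖ * Real.exp (-t)) := by
      rw [mul_comm (‖z‖ / (1 - ‖z‖)) _, mul_assoc, div_mul_cancel₀ _ hz1.ne']
      ring
    calc t ^ (s.re - 1) * ‖z * (Real.exp (-t) : ℂ)‖
        ≤ t ^ (s.re - 1) * (‖z‖ * Real.exp (-t)) :=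
          mul_le_mul_of_nonneg_left h2 (Real.rpow_nonneg ht.le _)
      _ = (‖z‖ / (1 - ‖z‖)) * (Real.exp (-t) * t ^ (s.re - 1)) * (1 - ‖z‖) := hEq.symm
      _ ≤ _ := mul_le_mul_of_nonneg_left h3 (by positivity)
  refine ⟨hint, ?_⟩
  -- the series
  have key : HasSum (fun k : ℕ+ => Complex.Gamma s * (z ^ (k:ℕ)) / (((k:ℕ):ℝ) : ℂ) ^ s)
      (mellin (fun t => z * Real.exp (-t) / (1 - z * Real.exp (-t))) s) := by
    apply hasSum_mellin (p := fun k : ℕ+ => ((k:ℕ):ℝ))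
      (fun k => Or.inr (show (0:ℝ) < ((k:ℕ):ℝ) by exact_mod_cast k.pos)) hs
    · intro t ht
      have ht : 0 < t := ht
      have hgeom := (hasSum_geometric_of_norm_lt_one (hlt t ht)).mul_left
        (z * (Real.exp (-t) : ℂ))
      rw [← div_eq_mul_inv] at hgeom
      have hfe : (fun n : ℕ => z ^ (n+1) * (Real.exp (-(((n+1:ℕ)):ℝ) * t) : ℂ))
          = fun n : ℕ => z * (Real.exp (-t) : ℂ) * (z * (Real.exp (-t) : ℂ)) ^ n := by
        funext n
        rw [← pow_succ', mul_pow, ← Complex.ofReal_pow, ← Real.exp_nat_mul]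
        congr 2
        push_cast
        ring_nf
      have key0 : HasSum (fun n : ℕ => z ^ (n+1) * (Real.exp (-(((n+1:ℕ)):ℝ) * t) : ℂ))
          (z * Real.exp (-t) / (1 - z * Real.exp (-t))) := by
        rw [hfe]; exact hgeom
      refine (Equiv.pnatEquivNat.symm.hasSum_iff).mp ?_
      have hfe2 : ((fun k : ℕ+ => z ^ (k:ℕ) * (Real.exp (-((k:ℕ):ℝ) * t) : ℂ))
          ∘ ⇑Equiv.pnatEquivNat.symm)
          = fun n : ℕ => z ^ (n+1) * (Real.exp (-(((n+1:ℕ)):ℝ) * t) : ℂ) := by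
        funext n
        simp [Function.comp]
      rw [hfe2]
      exact key0
    · refine Summable.of_nonneg_of_le (g := fun k : ℕ+ => ‖z ^ (k:ℕ)‖ / ((k:ℕ):ℝ) ^ s.re)
        (f := fun k : ℕ+ => ‖z‖ ^ (k:ℕ)) (fun k => by positivity) (fun k => ?_) ?_
      · have hk : (0:ℝ) < ((k:ℕ):ℝ) ^ s.re :=
          Real.rpow_pos_of_pos (by exact_mod_cast k.pos) _
        show ‖z ^ (k:ℕ)‖ / ((k:ℕ):ℝ) ^ s.re ≤ ‖z‖ ^ (k:ℕ)
        rw [norm_pow, div_le_iff₀ hk]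
        have h1 : (1:ℝ) ≤ ((k:ℕ):ℝ) ^ s.re :=
          Real.one_le_rpow (by exact_mod_cast k.one_le) hs.le
        nlinarith [pow_nonneg (norm_nonneg z) (k:ℕ)]
      · refine (Equiv.pnatEquivNat.symm.summable_iff).mp ?_
        have hgs := (summable_geometric_of_lt_one (norm_nonneg z) hz).mul_left ‖z‖
        refine hgs.congr fun n => ?_
        simp [Function.comp, pow_succ, mul_comm]
  have hmel : mellin (fun t => z * Real.exp (-t) / (1 - z * Real.exp (-t))) s
      = ∫ t in Set.Ioi (0:ℝ),
        (t : ℂ) ^ (s - 1) * (z * Real.exp (-t)) / (1 - z * Real.exp (-t)) := by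
    unfold mellin
    refine setIntegral_congr_fun measurableSet_Ioi fun t ht => ?_
    simp [smul_eq_mul, mul_div_assoc]
  rw [← hmel, ← key.tsum_eq, ← tsum_mul_left]
  refine tsum_congr fun k => ?_
  rw [mul_div_assoc]
  norm_cast
end

section
/- For every complex s with Re(s) > 0 and every complex z with z ≠ 0 and z not lying on the real ray [1, ∞), the function t ↦ t^{s−1} / (e^t / z − 1) is integrable on (0, ∞), where t^{s−1} = exp((s−1)·ln t) for t > 0. -/
open MeasureTheory

/-- For `Re(s) > 0` and `z ≠ 0` not on the real ray `[1, ∞)`, the integrand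
`t ↦ t^(s-1) / (e^t / z - 1)` is integrable on `(0, ∞)`. -/
theorem polylog_continuation_integrable (s z : ℂ) (hs : 0 < s.re) (hz0 : z ≠ 0)
    (hz : ¬ (z.im = 0 ∧ 1 ≤ z.re)) :
    IntegrableOn (fun t : ℝ => (t : ℂ) ^ (s - 1) / (Complex.exp t / z - 1)) (Set.Ioi 0) := by
  set f : ℝ → ℂ := fun t => (t : ℂ) ^ (s - 1) / (Complex.exp t / z - 1) with hf
  have hzpos : 0 < ‖z‖ := norm_pos_iff.mpr hz0
  -- the denominator never vanishes for t ≥ 0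
  have hden : ∀ t : ℝ, 0 ≤ t → Complex.exp t / z - 1 ≠ 0 := by
    intro t ht h
    have h1 : Complex.exp t = z := by
      have := sub_eq_zero.mp h
      field_simp at this
      exact this
    have h2 : z = ((Real.exp t : ℝ) : ℂ) := by
      rw [← h1, Complex.ofReal_exp]
    apply hz
    constructor
    · rw [h2]; simp
    · rw [h2, Complex.ofReal_re]; exact Real.one_le_exp ht
  -- continuity of f on Ioi 0
  have hcont : ContinuousOn f (Set.Ioi 0) := by
    apply ContinuousOn.div
    · intro t ht
      exact (Complex.continuousAt_ofReal_cpow_const t (s - 1) (Or.inr (ne_of_gt ht))).continuousWithinAt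
    · exact (((Complex.continuous_ofReal.cexp).div_const z).sub continuous_const).continuousOn
    · intro t ht
      exact hden t (le_of_lt ht)
  have hmeas : AEStronglyMeasurable f (volume.restrict (Set.Ioi (0:ℝ))) :=
    hcont.aestronglyMeasurable measurableSet_Ioi
  set T : ℝ := max 1 (Real.log (2 * ‖z‖)) with hT
  have hT1 : (1:ℝ) ≤ T := le_max_left _ _
  have hT0 : (0:ℝ) < T := lt_of_lt_of_le one_pos hT1
  rw [← Set.Ioc_union_Ioi_eq_Ioi (le_of_lt hT0), integrableOn_union]
  have hnorm_pow : ∀ t : ℝ, 0 < t → ‖(t : ℂ) ^ (s - 1)‖ = t ^ (s.re - 1) := by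
    intro t ht
    rw [Complex.norm_cpow_eq_rpow_re_of_pos ht]
    simp
  constructor
  · -- integrable on Ioc 0 T
    -- bound the reciprocal of the denominator on the compact set Icc 0 T
    have hgc : ContinuousOn (fun t : ℝ => (Complex.exp t / z - 1)⁻¹) (Set.Icc 0 T) := by
      apply ContinuousOn.inv₀
      · exact (((Complex.continuous_ofReal.cexp).div_const z).sub continuous_const).continuousOn
      · intro t ht; exact hden t ht.1
    obtain ⟨C, hC⟩ := (isCompact_Icc).exists_bound_of_continuousOn hgc
    have hbound_int : IntegrableOn (fun t : ℝ => C * t ^ (s.re - 1)) (Set.Ioc 0 T) := by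
      have h0 : IntegrableOn (fun x : ℝ => x ^ (s.re - 1)) (Set.Ioc 0 T) :=
        (intervalIntegrable_iff_integrableOn_Ioc_of_le (le_of_lt hT0)).mp
          (intervalIntegral.intervalIntegrable_rpow' (by linarith))
      exact h0.const_mul C
    refine Integrable.mono' hbound_int
      (hmeas.mono_set (Set.Ioc_subset_Ioi_self)) ?_
    rw [ae_restrict_iff' measurableSet_Ioc]
    filter_upwards with t ht
    have ht0 : 0 < t := ht.1
    have : f t = (t : ℂ) ^ (s - 1) * (Complex.exp t / z - 1)⁻¹ := div_eq_mul_inv _ _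
    rw [this, norm_mul, hnorm_pow t ht0]
    rw [mul_comm C _]
    apply mul_le_mul_of_nonneg_left (hC t ⟨le_of_lt ht0, ht.2⟩)
      (Real.rpow_nonneg (le_of_lt ht0) _)
  · -- integrable on Ioi T
    have hbound_int : IntegrableOn
        (fun t : ℝ => (2 * ‖z‖) * (Real.exp (-t) * t ^ (s.re - 1))) (Set.Ioi T) := by
      apply Integrable.const_mul
      exact (Real.GammaIntegral_convergent hs).mono_set (Set.Ioi_subset_Ioi (le_of_lt hT0))
    refine Integrable.mono' hbound_int
      (hmeas.mono_set (Set.Ioi_subset_Ioi (le_of_lt hT0))) ?_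
    rw [ae_restrict_iff' measurableSet_Ioi]
    filter_upwards with t ht
    have ht0 : 0 < t := lt_trans hT0 ht
    have hexp : 2 * ‖z‖ ≤ Real.exp t := by
      have : Real.log (2 * ‖z‖) ≤ t :=
        le_of_lt (lt_of_le_of_lt (le_max_right 1 _) ht)
      calc 2 * ‖z‖ = Real.exp (Real.log (2 * ‖z‖)) := by
            rw [Real.exp_log (by positivity)]
        _ ≤ Real.exp t := Real.exp_le_exp.mpr this
    -- lower bound on the denominator
    have hdenom_lb : Real.exp t / (2 * ‖z‖) ≤ ‖Complex.exp t / z - 1‖ := by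
      have h1 : ‖Complex.exp (t:ℂ) / z‖ - ‖(1:ℂ)‖ ≤ ‖Complex.exp t / z - 1‖ :=
        norm_sub_norm_le _ _
      have h2 : ‖Complex.exp (t:ℂ) / z‖ = Real.exp t / ‖z‖ := by
        rw [norm_div, Complex.norm_exp]
        simp
      rw [h2, norm_one] at h1
      refine le_trans ?_ h1
      rw [div_sub' (ne_of_gt hzpos), div_le_div_iff₀ (by positivity) hzpos]
      nlinarith [hexp, hzpos, mul_le_mul_of_nonneg_right hexp (le_of_lt hzpos)]
    have hdpos : 0 < Real.exp t / (2 * ‖z‖) := by positivity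
    rw [hf]
    simp only [norm_div]
    rw [hnorm_pow t ht0]
    calc t ^ (s.re - 1) / ‖Complex.exp t / z - 1‖
        ≤ t ^ (s.re - 1) / (Real.exp t / (2 * ‖z‖)) := by
          apply div_le_div_of_nonneg_left (Real.rpow_nonneg (le_of_lt ht0) _) hdpos hdenom_lb
      _ = 2 * ‖z‖ * (Real.exp (-t) * t ^ (s.re - 1)) := by
          rw [Real.exp_neg]
          field_simp
end

section
/- For every complex number s that is not a positive integer and every complex number u with |u| < 2π, the function k ↦ ζ(s−k) · u^k / k! (k ranging over the natural numbers) is summable, where ζ is the Riemann zeta function. -/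
open Real

lemma my_norm_Gamma_le (w : ℂ) (hw : 0 < w.re) : ‖Complex.Gamma w‖ ≤ Real.Gamma w.re := by
  rw [Complex.Gamma_eq_integral hw, Real.Gamma_eq_integral hw, Complex.GammaIntegral]
  refine (MeasureTheory.norm_integral_le_integral_norm _).trans_eq ?_
  refine MeasureTheory.setIntegral_congr_fun measurableSet_Ioi (fun x hx => ?_)
  rw [norm_mul, Complex.norm_real, Real.norm_of_nonneg (Real.exp_pos _).le,
    Complex.norm_cpow_eq_rpow_re_of_pos hx, Complex.sub_re, Complex.one_re]

lemma my_norm_cos_le (z : ℂ) : ‖Complex.cos z‖ ≤ Real.exp |z.im| := by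
  rw [Complex.cos]
  calc ‖(Complex.exp (z * Complex.I) + Complex.exp (-z * Complex.I)) / 2‖
      ≤ (‖Complex.exp (z * Complex.I)‖ + ‖Complex.exp (-z * Complex.I)‖) / 2 := by
        rw [norm_div, Complex.norm_ofNat]
        gcongr
        exact norm_add_le _ _
    _ ≤ Real.exp |z.im| := by
        rw [Complex.norm_exp, Complex.norm_exp]
        have h1 : (z * Complex.I).re = -z.im := by simp
        have h2 : (-z * Complex.I).re = z.im := by simp
        rw [h1, h2]
        have := abs_nonneg z.im
        have e1 : Real.exp (-z.im) ≤ Real.exp |z.im| := Real.exp_le_exp.2 (by cases abs_cases z.im <;> linarith)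
        have e2 : Real.exp (z.im) ≤ Real.exp |z.im| := Real.exp_le_exp.2 (le_abs_self _)
        linarith

lemma my_norm_zeta_le (w : ℂ) (hw : 2 ≤ w.re) :
    ‖riemannZeta w‖ ≤ ∑' n : ℕ, 1 / ((n : ℝ) + 1) ^ 2 := by
  have hsum2 : Summable (fun n : ℕ => 1 / ((n : ℝ) + 1) ^ 2) := by
    have := (summable_nat_add_iff (f := fun n : ℕ => 1 / (n : ℝ) ^ 2) 1).2
      (Real.summable_one_div_nat_pow.2 one_lt_two)
    simpa using this
  have hterm : ∀ n : ℕ, ‖1 / ((n : ℂ) + 1) ^ w‖ ≤ 1 / ((n : ℝ) + 1) ^ 2 := by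
    intro n
    have hpos : (0:ℝ) < (n : ℝ) + 1 := by positivity
    have hcast : ((n : ℂ) + 1) = (((n:ℝ) + 1 : ℝ) : ℂ) := by push_cast; ring
    rw [norm_div, norm_one, hcast, Complex.norm_cpow_eq_rpow_re_of_pos hpos]
    have h1 : ((n:ℝ)+1) ^ (2:ℕ) ≤ ((n:ℝ)+1) ^ w.re := by
      rw [← Real.rpow_natCast]
      exact Real.rpow_le_rpow_of_exponent_le (by linarith) (by exact_mod_cast hw)
    exact one_div_le_one_div_of_le (by positivity) h1
  rw [zeta_eq_tsum_one_div_nat_add_one_cpow (by linarith)]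
  refine (norm_tsum_le_tsum_norm ?_).trans (Summable.tsum_le_tsum hterm ?_ hsum2)
  · exact hsum2.of_nonneg_of_le (fun n => norm_nonneg _) hterm
  · exact hsum2.of_nonneg_of_le (fun n => norm_nonneg _) hterm

/-- For `s` not a positive integer and `|u| < 2π`, the series `∑ ζ(s-k) u^k / k!` is summable. -/
theorem polylog_series2_tail_summable (s : ℂ) (hs : ∀ n : ℕ+, s ≠ (n : ℂ)) (u : ℂ)
    (hu : ‖u‖ < 2 * π) :
    Summable (fun k : ℕ => riemannZeta (s - k) * u ^ k / (Nat.factorial k)) := by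
  have hπ : (0:ℝ) < 2 * π := by positivity
  set r : ℝ := ‖u‖ / (2 * π) with hr_def
  have hr0 : 0 ≤ r := by positivity
  have hr1 : r < 1 := (div_lt_one hπ).2 hu
  set a : ℝ := 1 - s.re with ha_def
  obtain ⟨m, hm⟩ := exists_nat_ge a
  set C₂ : ℝ := Real.exp (π * |s.im| / 2) with hC₂
  set C₃ : ℝ := ∑' n : ℕ, 1 / ((n : ℝ) + 1) ^ 2 with hC₃
  have hC₃0 : 0 ≤ C₃ := tsum_nonneg (fun n => by positivity)
  set B : ℝ := 2 * (2*π) ^ (s.re - 1) * C₂ * C₃ with hB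
  have hB0 : 0 ≤ B := by positivity
  set D : ℝ := B * 2 ^ m with hD
  refine Summable.of_norm_bounded_eventually_nat (g := fun k => D * ((k:ℝ) ^ m * r ^ k)) ?_ ?_
  · exact (summable_pow_mul_geometric_of_norm_lt_one m
      (by rwa [Real.norm_of_nonneg hr0])).mul_left D
  · filter_upwards [Filter.eventually_ge_atTop 1, Filter.eventually_ge_atTop ⌈2 - a⌉₊,
      Filter.eventually_ge_atTop m] with k hk1 hk2 hkm
    have hka : 2 - a ≤ (k:ℝ) := le_trans (Nat.le_ceil _) (by exact_mod_cast hk2)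
    set w : ℂ := 1 - s + k with hw_def
    have hw_re : w.re = a + k := by
      rw [hw_def, ha_def]
      simp [Complex.add_re, Complex.sub_re]
    have hw2 : 2 ≤ w.re := by rw [hw_re]; linarith
    have hw_im : w.im = -s.im := by simp [hw_def]
    -- functional equation
    have hA : ∀ n : ℕ, w ≠ -n := by
      intro n h
      have : s = ((1 + k + n : ℕ) : ℂ) := by push_cast; linear_combination -h
      exact hs ⟨1 + k + n, by omega⟩ this
    have hBne : w ≠ 1 := by
      intro h
      have : s = ((k : ℕ) : ℂ) := by linear_combination -h
      exact hs ⟨k, hk1⟩ this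
    have hsk : s - (k:ℂ) = 1 - w := by rw [hw_def]; ring
    have hfe : riemannZeta (s - k) = 2 * (2 * (π:ℂ)) ^ (-w) * Complex.Gamma w *
        Complex.cos (π * w / 2) * riemannZeta w := by
      rw [hsk]; exact riemannZeta_one_sub hA hBne
    -- cpow norm
    have hcpow : ‖(2 * (π:ℂ)) ^ (-w)‖ = (2*π) ^ (s.re - 1) * ((2*π) ^ k)⁻¹ := by
      have hcast : (2 * (π:ℂ)) = ((2*π : ℝ) : ℂ) := by push_cast; ring
      rw [hcast, Complex.norm_cpow_eq_rpow_re_of_pos hπ]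
      have : (-w).re = (s.re - 1) + (-(k:ℝ)) := by
        rw [Complex.neg_re, hw_re, ha_def]; ring
      rw [this, Real.rpow_add hπ, Real.rpow_neg hπ.le, Real.rpow_natCast]
    -- Gamma bound
    have hGamma : ‖Complex.Gamma w‖ ≤ ((m + k).factorial : ℝ) := by
      refine (my_norm_Gamma_le w (by linarith)).trans ?_
      have h1 : Real.Gamma w.re ≤ Real.Gamma ((m + k : ℕ) + 1) := by
        refine Real.Gamma_strictMonoOn_Ici.monotoneOn hw2 ?_ ?_
        · have : (1:ℝ) ≤ ((m+k:ℕ):ℝ) := by exact_mod_cast Nat.one_le_iff_ne_zero.2 (by omega)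
          simp only [Set.mem_Ici]; linarith
        · rw [hw_re]; push_cast
          have : a ≤ (m:ℝ) := hm
          linarith
      rwa [Real.Gamma_nat_eq_factorial] at h1
    -- cos bound
    have hcos : ‖Complex.cos (π * w / 2)‖ ≤ C₂ := by
      refine (my_norm_cos_le _).trans_eq ?_
      rw [hC₂]
      congr 1
      have : ((π:ℂ) * w / 2).im = π * w.im / 2 := by simp
      rw [this, hw_im]
      rw [abs_div, abs_mul, abs_of_pos Real.pi_pos, abs_neg]
      norm_num
    have hzeta : ‖riemannZeta w‖ ≤ C₃ := my_norm_zeta_le w hw2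
    -- combine
    have hZ : ‖riemannZeta (s - k)‖ ≤ B * ((m + k).factorial : ℝ) * ((2*π) ^ k)⁻¹ := by
      calc ‖riemannZeta (s - k)‖
          = 2 * ‖(2 * (π:ℂ)) ^ (-w)‖ * ‖Complex.Gamma w‖ * ‖Complex.cos (π * w / 2)‖ *
            ‖riemannZeta w‖ := by
            rw [hfe]; simp [norm_mul]
        _ ≤ 2 * ((2*π) ^ (s.re - 1) * ((2*π) ^ k)⁻¹) * ((m + k).factorial : ℝ) * C₂ * C₃ := by
            rw [hcpow]
            gcongr
        _ = B * ((m + k).factorial : ℝ) * ((2*π) ^ k)⁻¹ := by rw [hB]; ring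
    -- factorial bound
    have hfact : ((m + k).factorial : ℝ) ≤ (k.factorial : ℝ) * (2 ^ m * (k:ℝ) ^ m) := by
      have h1 : (m + k).factorial ≤ k.factorial * (2 * k) ^ m := by
        have e : k.factorial * (k+1).ascFactorial m = (k + m).factorial :=
          Nat.factorial_mul_ascFactorial k m
        have h2 : (k+1).ascFactorial m ≤ (k + m) ^ m := Nat.ascFactorial_le_pow_add k m
        have h3 : (k + m) ^ m ≤ (2 * k) ^ m := Nat.pow_le_pow_left (by omega) m
        calc (m + k).factorial = k.factorial * (k+1).ascFactorial m := by rw [e, Nat.add_comm]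
          _ ≤ k.factorial * (2 * k) ^ m := Nat.mul_le_mul_left _ (h2.trans h3)
      calc ((m + k).factorial : ℝ) ≤ ((k.factorial * (2 * k) ^ m : ℕ) : ℝ) := by exact_mod_cast h1
        _ = (k.factorial : ℝ) * (2 ^ m * (k:ℝ) ^ m) := by push_cast; ring
    -- final
    have hkfpos : (0:ℝ) < (k.factorial : ℝ) := by exact_mod_cast Nat.factorial_pos k
    calc ‖riemannZeta (s - k) * u ^ k / (Nat.factorial k : ℂ)‖
        = ‖riemannZeta (s - k)‖ * ‖u‖ ^ k / (k.factorial : ℝ) := by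
          rw [norm_div, norm_mul, norm_pow]
          congr 1
          rw [Complex.norm_natCast]
      _ ≤ (B * ((m + k).factorial : ℝ) * ((2*π) ^ k)⁻¹) * ‖u‖ ^ k / (k.factorial : ℝ) := by
          gcongr
      _ ≤ (B * ((k.factorial : ℝ) * (2 ^ m * (k:ℝ) ^ m)) * ((2*π) ^ k)⁻¹) * ‖u‖ ^ k /
            (k.factorial : ℝ) := by gcongr
      _ = D * ((k:ℝ) ^ m * r ^ k) := by
          rw [hD, hr_def, div_pow]
          field_simp
end

section
/- (Pole cancellation limit.) Let m be a natural number and let w be a complex number not lying on the closed negative real axis (−∞, 0]. Then, as τ → 0 through nonzero complex values, ζ(1+τ) + (−1)^m · m! · Γ(−m−τ) · w^τ tends to H_m − Log w, where ζ is the Riemann zeta function, Γ is the complex Gamma function, w^τ = exp(τ · Log w) with Log the principal complex logarithm, and H_m = ∑_{j=1}^{m} 1/j is the m-th harmonic number (H_0 = 0). -/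
open Filter

private lemma aux_gamma_prod (m : ℕ) (τ : ℂ) (hτ : ∀ k : ℕ, k ≤ m → τ + k ≠ 0) :
    Complex.Gamma (1 - τ) =
      (-1) ^ (m + 1) * (∏ k ∈ Finset.range (m + 1), (τ + k)) * Complex.Gamma (-(m : ℂ) - τ) := by
  induction m with
  | zero =>
      have h0 : (-τ : ℂ) ≠ 0 := by simpa using hτ 0 le_rfl
      have h := Complex.Gamma_add_one (-τ) h0
      rw [show (-τ + 1 : ℂ) = 1 - τ by ring] at h
      rw [h]
      simp
  | succ m ih =>
      have ih' := ih (fun k hk => hτ k (hk.trans (Nat.le_succ m)))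
      have hs : (-(↑(m + 1) : ℂ) - τ) ≠ 0 := by
        have h1 := hτ (m + 1) le_rfl
        intro h
        exact h1 (by linear_combination -h)
      have key : Complex.Gamma (-(m : ℂ) - τ) =
          (-(↑(m + 1) : ℂ) - τ) * Complex.Gamma (-(↑(m + 1) : ℂ) - τ) := by
        have h := Complex.Gamma_add_one (-(↑(m + 1) : ℂ) - τ) hs
        rw [show (-(↑(m + 1) : ℂ) - τ + 1) = -(m : ℂ) - τ by push_cast; ring] at h
        exact h
      rw [ih', key]
      conv_rhs => rw [Finset.prod_range_succ]
      push_cast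
      ring

private lemma aux_prod_val (m : ℕ) :
    (∏ k ∈ Finset.range m, ((0 : ℂ) + ((k : ℂ) + 1))) = (Nat.factorial m : ℂ) := by
  rw [← Finset.prod_range_add_one_eq_factorial m]
  push_cast
  simp

private lemma aux_deriv (m : ℕ) (w : ℂ) :
    HasDerivAt
      (fun τ : ℂ => (Nat.factorial m : ℂ) *
          (Complex.Gamma (1 - τ) * Complex.exp (Complex.log w * τ))
        / ∏ k ∈ Finset.range m, (τ + ((k : ℂ) + 1)))
      ((Real.eulerMascheroniConstant : ℂ) + Complex.log w - (harmonic m : ℂ)) 0 := by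
  have hfac : (Nat.factorial m : ℂ) ≠ 0 := by
    exact_mod_cast Nat.factorial_ne_zero m
  have hprod0 := aux_prod_val m
  -- derivative of Γ(1-τ) at 0
  have h1 : HasDerivAt (fun τ : ℂ => Complex.Gamma (1 - τ))
      ((Real.eulerMascheroniConstant : ℂ)) 0 := by
    have hinner : HasDerivAt (fun τ : ℂ => 1 - τ) (-1) 0 := by
      simpa using (hasDerivAt_id (0 : ℂ)).const_sub 1
    have hg : HasDerivAt Complex.Gamma (-(Real.eulerMascheroniConstant : ℂ))
        ((fun τ : ℂ => 1 - τ) 0) := by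
      simpa using Complex.hasDerivAt_Gamma_one
    have := hg.comp 0 hinner
    refine this.congr_deriv ?_
    ring
  -- derivative of exp(L τ) at 0
  have h2 : HasDerivAt (fun τ : ℂ => Complex.exp (Complex.log w * τ)) (Complex.log w) 0 := by
    have hinner : HasDerivAt (fun τ : ℂ => Complex.log w * τ) (Complex.log w) 0 := by
      simpa using (hasDerivAt_id (0 : ℂ)).const_mul (Complex.log w)
    simpa using hinner.cexp
  -- derivative of the product at 0
  have h3 : HasDerivAt (fun τ : ℂ => ∏ k ∈ Finset.range m, (τ + ((k : ℂ) + 1)))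
      ((Nat.factorial m : ℂ) * (harmonic m : ℂ)) 0 := by
    have hterm : ∀ k ∈ Finset.range m, HasDerivAt (fun τ : ℂ => τ + ((k : ℂ) + 1)) 1 0 :=
      fun k _ => by simpa using (hasDerivAt_id (0 : ℂ)).add_const ((k : ℂ) + 1)
    have hmain := HasDerivAt.fun_finsetProd hterm
    refine hmain.congr_deriv (Eq.symm ?_)
    have hk0 : ∀ k : ℕ, ((k : ℂ) + 1) ≠ 0 := fun k => Nat.cast_add_one_ne_zero k
    have herase : ∀ k ∈ Finset.range m,
        (∏ j ∈ (Finset.range m).erase k, ((0 : ℂ) + ((j : ℂ) + 1)))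
          = (Nat.factorial m : ℂ) / ((k : ℂ) + 1) := by
      intro k hk
      rw [eq_div_iff (hk0 k), mul_comm, ← hprod0,
        ← Finset.mul_prod_erase (Finset.range m) (fun j : ℕ => ((0 : ℂ) + ((j : ℂ) + 1))) hk]
      ring
    rw [Finset.sum_congr rfl (fun k hk => by rw [smul_eq_mul, mul_one, herase k hk])]
    have hharm : (harmonic m : ℂ) = ∑ k ∈ Finset.range m, ((k : ℂ) + 1)⁻¹ := by
      rw [harmonic]
      push_cast
      rfl
    rw [hharm, Finset.mul_sum]
    exact Finset.sum_congr rfl (fun k _ => by rw [div_eq_mul_inv])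
  have hP0 : (∏ k ∈ Finset.range m, ((0 : ℂ) + ((k : ℂ) + 1))) ≠ 0 := by
    rw [hprod0]; exact hfac
  have h4 := (((h1.mul h2).const_mul ((Nat.factorial m : ℂ))).div h3 hP0)
  refine h4.congr_deriv (Eq.symm ?_)
  simp only [Pi.mul_apply, mul_zero, Complex.exp_zero, sub_zero, Complex.Gamma_one, hprod0, mul_one, one_mul]
  field_simp

private lemma aux_alg (m : ℕ) (a b c P : ℂ) (hP : P ≠ 0) {τ : ℂ} (hτ : τ ≠ 0) :
    (-1 : ℂ) ^ m * a * (b / ((-1) ^ (m + 1) * (P * τ))) * c = -(a * (b * c) / P) / τ := by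
  have hpow : ((-1 : ℂ)) ^ (m + 1) ≠ 0 := pow_ne_zero _ (by norm_num)
  field_simp
  ring

/-- Pole cancellation: as `τ → 0` (through nonzero values),
`ζ(1+τ) + (-1)^m m! Γ(-m-τ) w^τ → H_m - Log w`, for `w` off the closed negative real axis. -/
theorem polylog_pole_cancellation (m : ℕ) (w : ℂ) (hw : ¬ (w.im = 0 ∧ w.re ≤ 0)) :
    Tendsto
      (fun τ : ℂ => riemannZeta (1 + τ)
        + (-1 : ℂ) ^ m * (Nat.factorial m) * Complex.Gamma (-(m : ℂ) - τ) * w ^ τ)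
      (nhdsWithin 0 {(0 : ℂ)}ᶜ)
      (nhds ((harmonic m : ℂ) - Complex.log w)) := by
  have hw0 : w ≠ 0 := by
    rintro rfl
    exact hw ⟨by simp, by simp⟩
  set L : ℂ := Complex.log w with hL
  set G : ℂ → ℂ := fun τ => (Nat.factorial m : ℂ) *
      (Complex.Gamma (1 - τ) * Complex.exp (L * τ))
    / ∏ k ∈ Finset.range m, (τ + ((k : ℂ) + 1)) with hGdef
  set D : ℂ := (Real.eulerMascheroniConstant : ℂ) + L - (harmonic m : ℂ) with hDdef
  have hD : HasDerivAt G D 0 := aux_deriv m w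
  have hG0 : G 0 = 1 := by
    simp only [hGdef]
    rw [aux_prod_val m]
    simp [Complex.Gamma_one, Nat.cast_ne_zero.mpr (Nat.factorial_ne_zero m)]
  -- slope limit
  have hslope : Tendsto (fun τ : ℂ => (G τ - 1) / τ) (nhdsWithin 0 {(0 : ℂ)}ᶜ) (nhds D) := by
    have h := hasDerivAt_iff_tendsto_slope.mp hD
    refine h.congr' ?_
    filter_upwards [self_mem_nhdsWithin] with τ hτ
    simp [slope_def_field, hG0]
  -- zeta part
  have hmap : Tendsto (fun τ : ℂ => 1 + τ) (nhdsWithin 0 {(0 : ℂ)}ᶜ)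
      (nhdsWithin 1 {(1 : ℂ)}ᶜ) := by
    apply tendsto_nhdsWithin_of_tendsto_nhds_of_eventually_within
    · have : Tendsto (fun τ : ℂ => 1 + τ) (nhds 0) (nhds 1) := by
        simpa using (continuous_const.fun_add continuous_id).tendsto (0 : ℂ)
      exact this.mono_left nhdsWithin_le_nhds
    · filter_upwards [self_mem_nhdsWithin] with τ hτ
      simp only [Set.mem_compl_iff, Set.mem_singleton_iff] at hτ ⊢
      intro h
      exact hτ (by linear_combination h)
  have part1 : Tendsto (fun τ : ℂ => riemannZeta (1 + τ) - 1 / τ)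
      (nhdsWithin 0 {(0 : ℂ)}ᶜ) (nhds ((Real.eulerMascheroniConstant : ℂ))) := by
    have h := tendsto_riemannZeta_sub_one_div.comp hmap
    refine h.congr ?_
    intro τ
    simp [Function.comp, add_sub_cancel_left]
  -- eventual identity
  have hev : ∀ᶠ τ : ℂ in nhdsWithin 0 {(0 : ℂ)}ᶜ,
      riemannZeta (1 + τ)
          + (-1 : ℂ) ^ m * (Nat.factorial m) * Complex.Gamma (-(m : ℂ) - τ) * w ^ τ
        = (riemannZeta (1 + τ) - 1 / τ) + (-((G τ - 1) / τ)) := by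
    have hball : ∀ᶠ τ : ℂ in nhdsWithin 0 {(0 : ℂ)}ᶜ, ‖τ‖ < 1 / 2 := by
      apply eventually_nhdsWithin_of_eventually_nhds
      filter_upwards [Metric.ball_mem_nhds (0 : ℂ) (by norm_num : (0 : ℝ) < 1 / 2)] with τ hτ
      simpa [Metric.mem_ball, dist_eq_norm] using hτ
    filter_upwards [hball, self_mem_nhdsWithin] with τ hτn hτ0
    simp only [Set.mem_compl_iff, Set.mem_singleton_iff] at hτ0
    have hτk : ∀ k : ℕ, k ≤ m → τ + k ≠ 0 := by
      intro k hk h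
      rcases Nat.eq_zero_or_pos k with rfl | hkpos
      · exact hτ0 (by simpa using h)
      · have hτeq : τ = -(k : ℂ) := by linear_combination h
        have hnorm : ‖τ‖ = (k : ℝ) := by rw [hτeq]; simp
        have h1 : (1 : ℝ) ≤ ‖τ‖ := by rw [hnorm]; exact_mod_cast hkpos
        linarith
    have hPne : (∏ k ∈ Finset.range m, (τ + ((k : ℂ) + 1))) ≠ 0 := by
      rw [Finset.prod_ne_zero_iff]
      intro k hk
      have := hτk (k + 1) (Nat.succ_le_of_lt (Finset.mem_range.mp hk))
      push_cast at this
      exact this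
    have hid := aux_gamma_prod m τ hτk
    have hsplit : (∏ k ∈ Finset.range (m + 1), (τ + (k : ℂ)))
        = (∏ k ∈ Finset.range m, (τ + ((k : ℂ) + 1))) * τ := by
      rw [Finset.prod_range_succ']
      push_cast
      simp
    rw [hsplit] at hid
    have hcpow : w ^ τ = Complex.exp (L * τ) := by
      rw [hL, Complex.cpow_def_of_ne_zero hw0]
    have hpow : ((-1 : ℂ)) ^ (m + 1) ≠ 0 := pow_ne_zero _ (by norm_num)
    have hGam : Complex.Gamma (-(m : ℂ) - τ)
        = Complex.Gamma (1 - τ) /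
          ((-1) ^ (m + 1) * ((∏ k ∈ Finset.range m, (τ + ((k : ℂ) + 1))) * τ)) := by
      rw [eq_div_iff (mul_ne_zero hpow (mul_ne_zero hPne hτ0)), hid]
      ring
    have hGτ : G τ = (Nat.factorial m : ℂ) *
        (Complex.Gamma (1 - τ) * Complex.exp (L * τ))
      / ∏ k ∈ Finset.range m, (τ + ((k : ℂ) + 1)) := by simp only [hGdef]
    have hkey : (-1 : ℂ) ^ m * (Nat.factorial m) * Complex.Gamma (-(m : ℂ) - τ) * w ^ τ
        = -(G τ) / τ := by
      rw [hcpow, hGam, hGτ]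
      exact aux_alg m _ _ _ _ hPne hτ0
    rw [hkey]
    field_simp
    ring
  -- combine
  have part2 : Tendsto (fun τ : ℂ => -((G τ - 1) / τ)) (nhdsWithin 0 {(0 : ℂ)}ᶜ) (nhds (-D)) :=
    hslope.neg
  have hsum := part1.add part2
  have hfinal : (Real.eulerMascheroniConstant : ℂ) + -D = (harmonic m : ℂ) - Complex.log w := by
    rw [hDdef, hL]
    ring
  rw [hfinal] at hsum
  exact hsum.congr' (by filter_upwards [hev] with τ h using h.symm)
end

section
/- Let m be a natural number. As z → −m through complex values z ≠ −m, the quantity Γ(z) − (−1)^m / (m! · (z + m)) tends to (−1)^m (H_m − γ) / m!, where Γ is the complex Gamma function, H_m = ∑_{j=1}^{m} 1/j is the m-th harmonic number (H_0 = 0), and γ is the Euler–Mascheroni constant. -/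
open Filter

section aux
open Finset

private lemma prod_neg_cast (m : ℕ) :
    ∏ j ∈ range m, (-(m : ℂ) + j) = (-1) ^ m * (Nat.factorial m) := by
  rw [← Finset.prod_range_reflect]
  have h : ∀ j ∈ range m, (-(m : ℂ) + (m - 1 - j : ℕ)) = (-1) * ((j : ℂ) + 1) := by
    intro j hj
    rw [mem_range] at hj
    have h1 : 1 + j ≤ m := by omega
    rw [Nat.sub_sub, Nat.cast_sub h1]
    push_cast
    ring
  rw [Finset.prod_congr rfl h, Finset.prod_mul_distrib, Finset.prod_const, card_range]
  have := Finset.prod_range_add_one_eq_factorial m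
  have : ((∏ x ∈ range m, (x + 1) : ℕ) : ℂ) = (Nat.factorial m : ℂ) := by rw [this]
  push_cast at this
  rw [this]

private lemma sum_inv_cast (m : ℕ) :
    ∑ i ∈ range m, (-(m : ℂ) + i)⁻¹ = -(harmonic m : ℂ) := by
  rw [← Finset.sum_range_reflect]
  have h : ∀ j ∈ range m, (-(m : ℂ) + (m - 1 - j : ℕ))⁻¹ = -((j : ℂ) + 1)⁻¹ := by
    intro j hj
    rw [mem_range] at hj
    have h1 : 1 + j ≤ m := by omega
    rw [Nat.sub_sub, Nat.cast_sub h1]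
    push_cast
    rw [show -(m:ℂ) + (m - (1+j)) = -(j+1) by ring, inv_neg]
  rw [Finset.sum_congr rfl h, Finset.sum_neg_distrib]
  simp [harmonic]

private lemma gamma_rec (n : ℕ) (z : ℂ) (hz : ∀ k ∈ range n, z + k ≠ 0) :
    Complex.Gamma (z + n) = (∏ k ∈ range n, (z + k)) * Complex.Gamma z := by
  induction n with
  | zero => simp
  | succ n ih =>
    have h0 : z + n ≠ 0 := hz n (by simp)
    have : Complex.Gamma (z + (n+1)) = (z + n) * Complex.Gamma (z + n) := by
      rw [show z + ((n : ℂ) + 1) = (z + n) + 1 by ring, Complex.Gamma_add_one _ h0]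
    push_cast
    rw [this, ih (fun k hk => hz k (by simp at hk ⊢; omega)), prod_range_succ]
    ring

end aux

open Finset in
/-- Laurent expansion of `Γ` at `-m`: as `z → -m` (through `z ≠ -m`),
`Γ(z) - (-1)^m/(m!(z+m)) → (-1)^m (H_m - γ)/m!`. -/
theorem gamma_sub_pole_tendsto (m : ℕ) :
    Tendsto
      (fun z : ℂ => Complex.Gamma z - (-1 : ℂ) ^ m / ((Nat.factorial m) * (z + m)))
      (nhdsWithin (-(m : ℂ)) {(-(m : ℂ))}ᶜ)
      (nhds ((-1 : ℂ) ^ m * ((harmonic m : ℂ) - (Real.eulerMascheroniConstant : ℂ))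
        / (Nat.factorial m))) := by
  set γ : ℝ := Real.eulerMascheroniConstant
  set f : ℂ → ℂ := fun z => Complex.Gamma (z + (m + 1 : ℕ)) / ∏ j ∈ range m, (z + j) with hf_def
  set P : ℂ := (-1) ^ m * (Nat.factorial m) with hP
  have hfac : (Nat.factorial m : ℂ) ≠ 0 := by
    exact_mod_cast Nat.factorial_ne_zero m
  have hPne : P ≠ 0 := by
    apply mul_ne_zero _ hfac
    exact pow_ne_zero _ (by norm_num)
  -- derivative of numerator
  have hg : HasDerivAt (fun z : ℂ => Complex.Gamma (z + (m + 1 : ℕ)))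
      (-(γ : ℂ)) (-(m : ℂ)) := by
    have hinner : HasDerivAt (fun z : ℂ => z + (m + 1 : ℕ)) 1 (-(m : ℂ)) := by
      simpa using (hasDerivAt_id (-(m : ℂ))).add_const ((m + 1 : ℕ) : ℂ)
    have h1 : (-(m : ℂ) + (m + 1 : ℕ)) = 1 := by push_cast; ring
    have := (h1 ▸ Complex.hasDerivAt_Gamma_one).comp (-(m : ℂ)) hinner
    simpa [Function.comp_def, γ] using this
  -- derivative of denominator
  have hh : HasDerivAt (fun z : ℂ => ∏ j ∈ range m, (z + j))
      (∑ i ∈ range m, (∏ j ∈ (range m).erase i, (-(m : ℂ) + j)) • (1 : ℂ)) (-(m : ℂ)) := by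
    exact HasDerivAt.fun_finsetProd (fun i _ => (hasDerivAt_id _).add_const _)
  have hSum : (∑ i ∈ range m, (∏ j ∈ (range m).erase i, (-(m : ℂ) + j)) • (1 : ℂ))
      = -P * (harmonic m : ℂ) := by
    have herase : ∀ i ∈ range m, (∏ j ∈ (range m).erase i, (-(m : ℂ) + j))
        = P * (-(m : ℂ) + i)⁻¹ := by
      intro i hi
      have hne : (-(m : ℂ) + i) ≠ 0 := by
        rw [mem_range] at hi
        intro h
        have : (m : ℂ) = i := by linear_combination -h
        have : (m : ℕ) = i := by exact_mod_cast this
        omega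
      have h2 := Finset.prod_erase_mul (range m) (fun j => (-(m : ℂ) + j)) hi
      rw [hP, ← prod_neg_cast m, ← h2]
      field_simp
    rw [Finset.sum_congr rfl (fun i hi => by rw [smul_eq_mul, mul_one, herase i hi]),
      ← Finset.mul_sum, sum_inv_cast]
    ring
  have hprodval : (∏ j ∈ range m, (-(m : ℂ) + j)) = P := prod_neg_cast m
  -- derivative of f
  have hfd : HasDerivAt f ((-(γ : ℂ) * P - Complex.Gamma (-(m : ℂ) + (m + 1 : ℕ)) *
      (-P * (harmonic m : ℂ))) / P ^ 2) (-(m : ℂ)) := by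
    have := hg.div hh (by rw [hprodval]; exact hPne)
    rw [hSum, hprodval] at this
    exact this
  have hgval : Complex.Gamma (-(m : ℂ) + (m + 1 : ℕ)) = 1 := by
    rw [show (-(m : ℂ) + (m + 1 : ℕ)) = 1 by push_cast; ring, Complex.Gamma_one]
  rw [hgval] at hfd
  have hPinv : P⁻¹ = (-1 : ℂ) ^ m / (Nat.factorial m) := by
    rw [hP, mul_inv, ← inv_pow, inv_neg, inv_one, div_eq_mul_inv]
  have hDval : (-(γ : ℂ) * P - 1 * (-P * (harmonic m : ℂ))) / P ^ 2
      = (-1 : ℂ) ^ m * ((harmonic m : ℂ) - (γ : ℂ)) / (Nat.factorial m) := by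
    have h1 : (-(γ : ℂ) * P - 1 * (-P * (harmonic m : ℂ)))
        = ((harmonic m : ℂ) - (γ : ℂ)) * P := by ring
    rw [h1, pow_two, mul_div_mul_right _ _ hPne, div_eq_mul_inv, hPinv]
    ring
  rw [hDval] at hfd
  -- from derivative to slope limit
  have hslope := hasDerivAt_iff_tendsto_slope.mp hfd
  refine hslope.congr' ?_
  -- eventual equality
  have hball : Metric.ball (-(m : ℂ)) 1 ∈ nhdsWithin (-(m : ℂ)) {(-(m : ℂ))}ᶜ :=
    nhdsWithin_le_nhds (Metric.ball_mem_nhds _ one_pos)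
  filter_upwards [hball, self_mem_nhdsWithin] with z hz1 hz2
  have hzm : z + m ≠ 0 := by
    intro h
    apply hz2
    simp only [Set.mem_compl_iff, Set.mem_singleton_iff] at *
    linear_combination h
  have hk : ∀ k ∈ range m, z + k ≠ 0 := by
    intro k hk h0
    rw [mem_range] at hk
    have hzk : z = -(k : ℂ) := by linear_combination h0
    rw [Metric.mem_ball, dist_eq_norm, hzk] at hz1
    have : -(k : ℂ) - -(m : ℂ) = ((m - k : ℕ) : ℂ) := by
      push_cast [Nat.cast_sub hk.le]; ring
    rw [this] at hz1
    rw [Complex.norm_natCast] at hz1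
    have h1 : 1 ≤ m - k := by omega
    have h2 : (1 : ℝ) ≤ ((m - k : ℕ) : ℝ) := by exact_mod_cast h1
    linarith
  have hk1 : ∀ k ∈ range (m + 1), z + k ≠ 0 := by
    intro k hkk
    rw [mem_range] at hkk
    rcases Nat.lt_succ_iff_lt_or_eq.mp hkk with h | h
    · exact hk k (mem_range.mpr h)
    · subst h; exact hzm
  have hrec := gamma_rec (m + 1) z hk1
  have hprodz : (∏ j ∈ range m, (z + j)) ≠ 0 := Finset.prod_ne_zero_iff.mpr hk
  -- f z = (z+m) * Gamma z
  have hfz : f z = (z + m) * Complex.Gamma z := by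
    rw [hf_def]
    simp only
    rw [hrec, prod_range_succ]
    field_simp
  have hfm : f (-(m : ℂ)) = P⁻¹ := by
    rw [hf_def]
    simp only
    rw [hgval, hprodval, one_div]
  -- slope computation
  rw [slope_def_field, hfz, hfm, sub_neg_eq_add, hPinv]
  field_simp
end

section
/- For every integer n ≥ 1, the (n+1)-st derivative of the function x ↦ ln Γ(x) (real Gamma function, x > 0) evaluated at x = 1 equals (−1)^{n+1} · n! · ζ(n+1), i.e., ψ^{(n)}(1) = (−1)^{n+1} n! ζ(n+1), where ζ is the Riemann zeta function. -/
open Real Set Filter Topology Finset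

noncomputable def lgam : ℝ → ℝ := fun x => Real.log (Real.Gamma x)

noncomputable def psi : ℝ → ℝ := deriv lgam

lemma lgam_diff {x : ℝ} (hx : 0 < x) : DifferentiableAt ℝ lgam x := by
  refine ((Real.differentiableAt_Gamma ?_).log (Real.Gamma_ne_zero ?_)) <;>
    exact fun m => by
      have : (0:ℝ) ≤ (m:ℝ) := Nat.cast_nonneg m
      intro hc; rw [hc] at hx; linarith

lemma psi_rec {x : ℝ} (hx : 0 < x) : psi (x + 1) = psi x + 1 / x := by
  have h_rec : ∀ y : ℝ, 0 < y → lgam (y + 1) = lgam y + Real.log y := fun y hy => by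
    simp only [lgam, Real.Gamma_add_one hy.ne',
      Real.log_mul hy.ne' (Real.Gamma_pos_of_pos hy).ne', add_comm]
  unfold psi
  rw [← deriv_comp_add_const, one_div, ← Real.deriv_log,
    ← deriv_add (lgam_diff hx) (Real.differentiableAt_log hx.ne')]
  apply Filter.EventuallyEq.deriv_eq
  filter_upwards [eventually_gt_nhds hx] using h_rec

lemma psi_mono {x y : ℝ} (hx : 0 < x) (hxy : x ≤ y) : psi x ≤ psi y := by
  rcases eq_or_lt_of_le hxy with rfl | h
  · exact le_refl _
  · have hy : 0 < y := lt_trans hx h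
    have hc : ConvexOn ℝ (Ioi 0) lgam := Real.convexOn_log_Gamma
    calc psi x ≤ slope lgam x y :=
          hc.deriv_le_slope hx hy h (lgam_diff hx)
      _ ≤ psi y := hc.slope_le_deriv hx hy h (lgam_diff hy)

lemma psi_shift {x : ℝ} (hx : 0 < x) (N : ℕ) :
    psi (x + N) = psi x + ∑ k ∈ Finset.range N, 1 / (x + k) := by
  induction N with
  | zero => simp
  | succ N ih =>
    have h1 : x + (N + 1 : ℕ) = (x + N) + 1 := by push_cast; ring
    rw [h1, psi_rec (by positivity), ih, Finset.sum_range_succ]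
    ring

lemma summable_sq : Summable (fun k : ℕ => (((1:ℝ) + k) ^ 2)⁻¹) := by
  have h := (Real.summable_one_div_nat_pow (p := 2)).mpr one_lt_two
  have h2 := (summable_nat_add_iff 1).mpr h
  refine h2.congr fun k => ?_
  push_cast
  rw [one_div, add_comm]

lemma summable_inv_pow {p : ℕ} (hp : 2 ≤ p) {r : ℝ} (hr : (1/2 : ℝ) ≤ r) :
    Summable (fun k : ℕ => ((r + k) ^ p)⁻¹) := by
  refine Summable.of_nonneg_of_le (fun k => by positivity)
    (fun k => ?_) ((summable_sq.mul_left ((2:ℝ) ^ p)))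
  have hk1 : (1:ℝ) ≤ 1 + k := by simp
  have h0 : (0:ℝ) < 1 + k := by positivity
  have key : ((1:ℝ)/2) * (1 + k) ≤ r + k := by
    have : (0:ℝ) ≤ k := Nat.cast_nonneg k
    nlinarith
  have h2 : ((1:ℝ) + k) ^ 2 ≤ (1 + k) ^ p := pow_le_pow_right₀ hk1 hp
  have h3 : (((1:ℝ)/2) * (1 + k)) ^ p ≤ (r + k) ^ p := by
    apply pow_le_pow_left₀ (by positivity) key
  rw [mul_pow] at h3
  have h5 : ((1:ℝ)/2)^p * (1+k)^2 ≤ (r+k)^p :=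
    le_trans (by gcongr) h3
  have h6 : (((1:ℝ)/2)^p)⁻¹ = (2:ℝ)^p := by rw [one_div, inv_pow, inv_inv]
  calc ((r + k) ^ p)⁻¹ ≤ (((1:ℝ)/2)^p * (1 + k) ^ 2)⁻¹ := inv_anti₀ (by positivity) h5
    _ = (2:ℝ)^p * ((1 + (k:ℝ)) ^ 2)⁻¹ := by rw [mul_inv, h6]

lemma summable_psi_terms {x : ℝ} (hx : x ∈ Set.Ioo (1/2 : ℝ) 2) :
    Summable (fun k : ℕ => 1 / (1 + (k:ℝ)) - 1 / (x + k)) := by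
  have hx1 : (1/2:ℝ) < x := hx.1
  refine Summable.of_norm_bounded
    ((summable_inv_pow le_rfl (le_refl (1/2:ℝ))).mul_left |x - 1|) (fun k => ?_)
  have h0 : (0:ℝ) < 1 + k := by positivity
  have hxk : (0:ℝ) < x + k := by positivity
  have heq : 1 / (1 + (k:ℝ)) - 1 / (x + k) = (x - 1) / ((1 + k) * (x + k)) := by
    field_simp
    ring
  rw [heq, Real.norm_eq_abs, abs_div, abs_of_pos (by positivity : (0:ℝ) < (1 + k) * (x + k)),
    div_eq_mul_inv]
  have hhalf : ((1:ℝ)/2 + k) ^ 2 ≤ (1 + k) * (x + k) := by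
    have h1 : (1/2:ℝ) + k ≤ 1 + k := by linarith
    have h2 : (1/2:ℝ) + k ≤ x + k := by linarith
    nlinarith [Nat.cast_nonneg (α := ℝ) k]
  exact mul_le_mul_of_nonneg_left (inv_anti₀ (by positivity) hhalf) (abs_nonneg _)

lemma psi_hasSum {x : ℝ} (hx : x ∈ Set.Ioo (1/2 : ℝ) 2) :
    HasSum (fun k : ℕ => 1 / (1 + (k:ℝ)) - 1 / (x + k)) (psi x - psi 1) := by
  have hsum := summable_psi_terms hx
  rw [hasSum_iff_tendsto_nat_of_summable_norm (by simpa using hsum.abs)]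
  have hx0 : (0:ℝ) < x := lt_trans (by norm_num) hx.1
  -- partial sums
  have hps : ∀ N : ℕ, ∑ k ∈ Finset.range N, (1 / (1 + (k:ℝ)) - 1 / (x + k))
      = (psi x - psi 1) + (psi (1 + N) - psi (x + N)) := by
    intro N
    have h1 := psi_shift one_pos N
    have h2 := psi_shift hx0 N
    rw [Finset.sum_sub_distrib]
    rw [show (1:ℝ) + N = psi (1 + N) - psi (1 + N) + (1 + N) from by ring] at h1
    have e1 : ∑ k ∈ Finset.range N, 1 / (1 + (k:ℝ)) = psi (1 + N) - psi 1 := by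
      rw [psi_shift one_pos N]; ring
    have e2 : ∑ k ∈ Finset.range N, 1 / (x + (k:ℝ)) = psi (x + N) - psi x := by
      rw [psi_shift hx0 N]; ring
    rw [e1, e2]; ring
  simp only [hps]
  have hbound : ∀ N : ℕ, |psi (1 + N) - psi (x + N)|
      ≤ 1 / ((N:ℝ) + 1/2) + 1 / ((N:ℝ) + 3/2) := by
    intro N
    have hN2 : (0:ℝ) < (N:ℝ) + 1/2 := by positivity
    have hlo : psi ((N:ℝ) + 1/2) ≤ psi (1 + N) := psi_mono hN2 (by push_cast; linarith)
    have hlo' : psi ((N:ℝ) + 1/2) ≤ psi (x + N) :=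
      psi_mono hN2 (by have := hx.1; push_cast; linarith)
    have hrec2 : psi ((N:ℝ) + 1/2 + 1 + 1) = psi ((N:ℝ) + 1/2) + 1/((N:ℝ)+1/2) + 1/((N:ℝ)+3/2) := by
      have e : (N:ℝ)+1/2+1+1 = ((N:ℝ)+3/2)+1 := by ring
      have e2 : (N:ℝ)+3/2 = ((N:ℝ)+1/2)+1 := by ring
      rw [e, psi_rec (by positivity), e2, psi_rec hN2]
    have hhi : psi (1 + N) ≤ psi ((N:ℝ) + 1/2 + 1 + 1) := psi_mono (by positivity) (by push_cast; linarith)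
    have hhi' : psi (x + N) ≤ psi ((N:ℝ) + 1/2 + 1 + 1) :=
      psi_mono (by positivity) (by have := hx.2; push_cast; linarith)
    rw [hrec2] at hhi hhi'
    rw [abs_le]
    constructor <;> linarith
  have hdelta : Tendsto (fun N : ℕ => 1 / ((N:ℝ) + 1/2) + 1 / ((N:ℝ) + 3/2)) atTop (𝓝 0) := by
    have t1 : Tendsto (fun N : ℕ => 1 / ((N:ℝ) + 1/2)) atTop (𝓝 0) := by
      simp only [one_div]
      exact tendsto_inv_atTop_zero.comp
        (tendsto_atTop_add_const_right _ _ tendsto_natCast_atTop_atTop)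
    have t2 : Tendsto (fun N : ℕ => 1 / ((N:ℝ) + 3/2)) atTop (𝓝 0) := by
      simp only [one_div]
      exact tendsto_inv_atTop_zero.comp
        (tendsto_atTop_add_const_right _ _ tendsto_natCast_atTop_atTop)
    simpa using t1.add t2
  have herr : Tendsto (fun N : ℕ => psi (1 + N) - psi (x + N)) atTop (𝓝 0) :=
    squeeze_zero_norm (fun N => by simpa using hbound N) hdelta
  simpa using herr.const_add (psi x - psi 1)

noncomputable def Tser (p : ℕ) (x : ℝ) : ℝ := ∑' k : ℕ, ((x + (k:ℝ)) ^ p)⁻¹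

lemma hasDerivAt_aux {p : ℕ} (hp : 1 ≤ p) {k : ℕ} {y : ℝ} (hy : 0 < y) :
    HasDerivAt (fun z : ℝ => ((z + (k:ℝ)) ^ p)⁻¹) (-(p:ℝ) * ((y + (k:ℝ)) ^ (p+1))⁻¹) y := by
  have hyk : (0:ℝ) < y + k := by positivity
  have h := (((hasDerivAt_id y).add_const (k:ℝ)).pow p).inv
    (pow_ne_zero p hyk.ne')
  simp only [id_eq, mul_one] at h
  have h' : HasDerivAt (fun z : ℝ => ((z + (k:ℝ)) ^ p)⁻¹)
      (-((p:ℝ) * (y + (k:ℝ)) ^ (p - 1)) / ((y + (k:ℝ)) ^ p) ^ 2) y := h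
  convert h' using 1
  have hsplit : ((y + (k:ℝ)) ^ p) ^ 2 = (y + k) ^ (p - 1) * (y + k) ^ (p + 1) := by
    rw [← pow_mul, ← pow_add]
    congr 1
    omega
  rw [hsplit, neg_div, div_eq_mul_inv, mul_inv, ← mul_assoc,
    mul_assoc ((p:ℝ)) ((y + (k:ℝ)) ^ (p-1)) (((y + (k:ℝ)) ^ (p-1))⁻¹),
    mul_inv_cancel₀ (pow_ne_zero _ hyk.ne'), mul_one, neg_mul]

lemma hasDerivAt_Tser {p : ℕ} (hp : 2 ≤ p) {x : ℝ} (hx : (1/2:ℝ) < x) :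
    HasDerivAt (Tser p) (-(p:ℝ) * Tser (p+1) x) x := by
  have key := hasDerivAt_tsum_of_isPreconnected
    (u := fun k : ℕ => (p:ℝ) * (((1/2:ℝ) + k) ^ (p+1))⁻¹)
    (((summable_inv_pow (by omega) (le_refl (1/2:ℝ)))).mul_left (p:ℝ))
    isOpen_Ioi isPreconnected_Ioi
    (g := fun (k : ℕ) (z : ℝ) => ((z + (k:ℝ)) ^ p)⁻¹)
    (g' := fun (k : ℕ) (z : ℝ) => -(p:ℝ) * ((z + (k:ℝ)) ^ (p+1))⁻¹)
    (fun k z hz => hasDerivAt_aux (by omega) (lt_trans (by norm_num) hz))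
    (fun k z hz => ?_) (show (1:ℝ) ∈ Ioi (1/2:ℝ) by norm_num)
    (by
      refine (summable_inv_pow (r := (1:ℝ)) hp (by norm_num)).congr fun k => ?_
      norm_num) hx
  · have : (∑' k : ℕ, -(p:ℝ) * ((x + (k:ℝ)) ^ (p+1))⁻¹) = -(p:ℝ) * Tser (p+1) x := by
      rw [tsum_mul_left]; rfl
    rw [← this]
    exact key
  · -- norm bound
    have hz' : (1/2:ℝ) < z := hz
    have h1 : (0:ℝ) < z + k := by positivity
    rw [Real.norm_eq_abs, abs_mul, abs_neg, abs_of_nonneg (by positivity : (0:ℝ) ≤ (p:ℝ)),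
      abs_of_nonneg (by positivity : (0:ℝ) ≤ ((z + (k:ℝ)) ^ (p+1))⁻¹)]
    exact mul_le_mul_of_nonneg_left
      (inv_anti₀ (by positivity) (pow_le_pow_left₀ (by positivity) (by linarith) _))
      (Nat.cast_nonneg p)

lemma hasDerivAt_Sser {x : ℝ} (hx : (1/2:ℝ) < x) :
    HasDerivAt (fun z : ℝ => ∑' k : ℕ, (1/(1+(k:ℝ)) - 1/(z + k))) (Tser 2 x) x := by
  have key := hasDerivAt_tsum_of_isPreconnected
    (u := fun k : ℕ => (((1/2:ℝ) + k) ^ 2)⁻¹)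
    (summable_inv_pow le_rfl (le_refl (1/2:ℝ)))
    isOpen_Ioi isPreconnected_Ioi
    (g := fun (k : ℕ) (z : ℝ) => 1/(1+(k:ℝ)) - 1/(z + k))
    (g' := fun (k : ℕ) (z : ℝ) => ((z + (k:ℝ)) ^ 2)⁻¹)
    (fun k z hz => ?_) (fun k z hz => ?_) (show (1:ℝ) ∈ Ioi (1/2:ℝ) by norm_num)
    (by
      refine summable_zero.congr fun k => ?_
      simp) hx
  · exact key
  · -- HasDerivAt of each term
    have hz' : (1/2:ℝ) < z := hz
    have hzk : (0:ℝ) < z + k := by positivity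
    have h := (((hasDerivAt_id z).add_const (k:ℝ)).inv hzk.ne').const_sub (1/(1+(k:ℝ)))
    simp only [id_eq, one_div] at h ⊢
    have h' : HasDerivAt (fun z : ℝ => (1 + (k:ℝ))⁻¹ - (z + (k:ℝ))⁻¹)
        (-(-1 / (z + (k:ℝ)) ^ 2)) z := h
    rw [neg_div, neg_neg, one_div] at h'
    exact h'
  · -- bound
    have hz' : (1/2:ℝ) < z := hz
    have hzk : (0:ℝ) < z + k := by positivity
    rw [Real.norm_eq_abs, abs_of_nonneg (by positivity)]
    exact inv_anti₀ (by positivity) (pow_le_pow_left₀ (by positivity) (by linarith) _)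

lemma iteratedDeriv_psi {m : ℕ} (hm : 1 ≤ m) :
    ∀ x ∈ Set.Ioo (1/2:ℝ) 2,
      iteratedDeriv m psi x = (-1:ℝ)^(m+1) * (Nat.factorial m) * Tser (m+1) x := by
  induction m, hm using Nat.le_induction with
  | base =>
    intro x hx
    have heq : psi =ᶠ[𝓝 x] fun y => psi 1 + ∑' k : ℕ, (1/(1+(k:ℝ)) - 1/(y + k)) := by
      filter_upwards [isOpen_Ioo.mem_nhds hx] with y hy
      rw [(psi_hasSum hy).tsum_eq]; ring
    rw [iteratedDeriv_one, heq.deriv_eq,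
      ((hasDerivAt_Sser hx.1).const_add (psi 1)).deriv]
    norm_num
  | succ m hm ih =>
    intro x hx
    have heq : iteratedDeriv m psi =ᶠ[𝓝 x]
        fun y => (-1:ℝ)^(m+1) * (Nat.factorial m) * Tser (m+1) y := by
      filter_upwards [isOpen_Ioo.mem_nhds hx] with y hy using ih y hy
    rw [iteratedDeriv_succ, heq.deriv_eq,
      ((hasDerivAt_Tser (p := m+1) (by omega) hx.1).const_mul
        ((-1:ℝ)^(m+1) * (Nat.factorial m))).deriv]
    push_cast [Nat.factorial_succ]
    ring

/-- Polygamma values at 1: `ψ⁽ⁿ⁾(1) = (-1)^(n+1) n! ζ(n+1)` for `n ≥ 1`, where `ψ⁽ⁿ⁾(1)` is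
the `(n+1)`-st derivative of `x ↦ ln Γ(x)` at `x = 1`. -/
theorem polygamma_one_eq_zeta (n : ℕ) (hn : 1 ≤ n) :
    ((iteratedDeriv (n + 1) (fun x : ℝ => Real.log (Real.Gamma x)) 1 : ℝ) : ℂ)
      = (-1 : ℂ) ^ (n + 1) * (Nat.factorial n) * riemannZeta (n + 1) := by
  have h1 : iteratedDeriv (n + 1) (fun x : ℝ => Real.log (Real.Gamma x)) 1
      = iteratedDeriv n psi 1 := by
    rw [iteratedDeriv_succ']
    rfl
  rw [h1, iteratedDeriv_psi hn 1 (by norm_num)]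
  have hzeta : riemannZeta ((n:ℂ) + 1) = ∑' k : ℕ, 1 / ((k:ℂ) + 1) ^ ((n:ℂ) + 1) := by
    apply zeta_eq_tsum_one_div_nat_add_one_cpow
    simp only [Complex.add_re, Complex.natCast_re, Complex.one_re]
    have : (1:ℝ) ≤ n := by exact_mod_cast hn
    linarith
  have hT : ((Tser (n+1) 1 : ℝ) : ℂ) = riemannZeta ((n:ℂ) + 1) := by
    rw [hzeta, Tser, Complex.ofReal_tsum]
    refine tsum_congr fun k => ?_
    push_cast
    rw [show ((n:ℂ) + 1) = ((n+1 : ℕ) : ℂ) by push_cast; ring, Complex.cpow_natCast]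
    rw [one_div, add_comm]
  push_cast
  rw [hT]
end
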